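/- Let C(x) count the odd-half pairs: the number of n ≤ x − 4 with n ≡ 2 (mod 4) such that both n and n + 4 are totients. Assuming the number of cousin prime pairs up to x is o(√x), C(x) = o(√x). -/

import Mathlib

open Filter Asymptotics


-- structure lemma
lemma lemB (m : ℕ) (h : Nat.totient m % 4 = 2) :
    (Nat.totient m + 1).Prime ∨
      ∃ q t : ℕ, q.Prime ∧ 2 ≤ t ∧ Nat.totient m = q ^ (t - 1) * (q - 1) := by
  have hm : m ≠ 0 := by rintro rfl; simp at h
  -- at most one odd prime factor
  by_cases htwo : ∃ q₁ ∈ m.primeFactors, ∃ q₂ ∈ m.primeFactors, q₁ ≠ q₂ ∧ q₁ ≠ 2 ∧ q₂ ≠ 2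
  · exfalso
    obtain ⟨q₁, h₁, q₂, h₂, hne, ho₁, ho₂⟩ := htwo
    have hp₁ := Nat.prime_of_mem_primeFactors h₁
    have hp₂ := Nat.prime_of_mem_primeFactors h₂
    have hdvd : (q₁ ^ (m.factorization q₁ - 1) * (q₁ - 1)) *
        (q₂ ^ (m.factorization q₂ - 1) * (q₂ - 1)) ∣ m.totient := by
      rw [Nat.totient_eq_prod_factorization hm]
      have := Finset.prod_dvd_prod_of_subset {q₁, q₂} m.factorization.support
        (fun p => p ^ (m.factorization p - 1) * (p - 1)) (by
          intro p hp
          simp only [Finset.mem_insert, Finset.mem_singleton] at hp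
          rcases hp with rfl | rfl
          · rwa [Nat.support_factorization]
          · rwa [Nat.support_factorization])
      rwa [Finset.prod_pair hne] at this
    have h4 : 4 ∣ m.totient := by
      have e₁ : 2 ∣ q₁ - 1 := (Nat.Prime.even_sub_one hp₁ ho₁).two_dvd
      have e₂ : 2 ∣ q₂ - 1 := (Nat.Prime.even_sub_one hp₂ ho₂).two_dvd
      calc (4:ℕ) = 2 * 2 := rfl
        _ ∣ (q₁ - 1) * (q₂ - 1) := mul_dvd_mul e₁ e₂
        _ ∣ _ := dvd_trans (mul_dvd_mul (Dvd.intro_left _ rfl) (Dvd.intro_left _ rfl)) hdvd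
    omega
  · push_neg at htwo
    obtain ⟨e, w, hwodd, hm2⟩ : ∃ e w, ¬2 ∣ w ∧ m = 2 ^ e * w :=
      ⟨m.factorization 2, ordCompl[2] m, Nat.not_dvd_ordCompl Nat.prime_two hm,
        (Nat.ordProj_mul_ordCompl_eq_self m 2).symm⟩
    have hwpos : 0 < w := Nat.pos_of_ne_zero fun h0 => hwodd (h0 ▸ dvd_zero 2)
    have hcop : Nat.Coprime (2 ^ e) w :=
      Nat.Coprime.pow_left _ (Nat.prime_two.coprime_iff_not_dvd.mpr hwodd)
    have htot : m.totient = (2 ^ e).totient * w.totient := by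
      conv_lhs => rw [hm2]
      exact Nat.totient_mul hcop
    have hwdvd : w ∣ m := Dvd.intro_left _ hm2.symm
    rcases Nat.lt_or_ge w 2 with hw1 | hw1
    · -- w = 1, m = 2 ^ e
      have hw1 : w = 1 := by omega
      rw [hw1, Nat.totient_one, mul_one] at htot
      have he1 : 1 ≤ e := by
        by_contra hc
        have : e = 0 := by omega
        rw [this, pow_zero, Nat.totient_one] at htot
        omega
      rw [Nat.totient_prime_pow Nat.prime_two he1, show (2:ℕ)-1 = 1 from rfl, mul_one] at htot
      have hd : e - 1 = 1 := by
        by_contra hne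
        rcases Nat.lt_or_ge (e - 1) 2 with h' | h'
        · have : e - 1 = 0 := by omega
          rw [this, pow_zero] at htot; omega
        · obtain ⟨c, hc⟩ := pow_dvd_pow 2 h'
          rw [hc] at htot
          have : (2:ℕ)^2 = 4 := rfl
          omega
      right
      exact ⟨2, 2, Nat.prime_two, le_rfl, by rw [htot, hd]; rfl⟩
    · -- w > 1: w is an odd prime power
      obtain ⟨q, hq, hqw⟩ := Nat.exists_prime_and_dvd (show w ≠ 1 by omega)
      have hq2 : q ≠ 2 := fun hc => hwodd (hc ▸ hqw)
      have hqm : q ∈ m.primeFactors :=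
        Nat.mem_primeFactors.mpr ⟨hq, hqw.trans hwdvd, hm⟩
      have huniq : ∀ {d : ℕ}, d.Prime → d ∣ w → d = q := by
        intro d hd hdw
        by_contra hdq
        have hd2 : d ≠ 2 := fun hc => hwodd (hc ▸ hdw)
        have hdm : d ∈ m.primeFactors :=
          Nat.mem_primeFactors.mpr ⟨hd, hdw.trans hwdvd, hm⟩
        exact hq2 (htwo d hdm q hqm hdq hd2)
      have hwq : w = q ^ w.primeFactorsList.length :=
        Nat.eq_prime_pow_of_unique_prime_dvd hwpos.ne' huniq
      set t := w.primeFactorsList.length with ht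
      have ht1 : 1 ≤ t := by
        rcases Nat.eq_zero_or_pos t with h0 | h0
        · rw [h0, pow_zero] at hwq; omega
        · exact h0
      have htotw : w.totient = q ^ (t - 1) * (q - 1) := by
        rw [hwq]; exact Nat.totient_prime_pow hq ht1
      have hqodd : 2 ∣ q - 1 := (Nat.Prime.even_sub_one hq hq2).two_dvd
      have he1 : e ≤ 1 := by
        by_contra hc
        push_neg at hc
        have h2e : 2 ∣ (2 ^ e).totient := by
          rw [Nat.totient_prime_pow Nat.prime_two (by omega)]
          exact Dvd.dvd.mul_right (dvd_pow_self 2 (by omega)) _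
        obtain ⟨a, ha⟩ := h2e
        obtain ⟨b, hb⟩ := hqodd
        have h4 : m.totient = 4 * (a * (q ^ (t-1) * b)) := by
          rw [htot, htotw, ha, hb]; ring
        omega
      have htote : (2 ^ e).totient = 1 := by
        have : e = 0 ∨ e = 1 := by omega
        rcases this with h0 | h0 <;> rw [h0] <;> simp
      rw [htote, one_mul, htotw] at htot
      rcases eq_or_lt_of_le ht1 with ht2 | ht2
      · left
        have h2q := hq.two_le
        have : m.totient + 1 = q := by rw [htot, ← ht2, pow_zero, one_mul]; omega
        rw [this]; exact hq
      · right
        exact ⟨q, t, hq, ht2, htot⟩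


noncomputable def gmax (n : ℕ) : ℕ :=
  if h : n.primeFactors.Nonempty then n.primeFactors.max' h else 0

lemma gmax_spec {q s n : ℕ} (hq : q.Prime) (hs : 1 ≤ s) (hn : n = q ^ s * (q - 1)) :
    gmax n = q := by
  have hq2 := hq.two_le
  have hn0 : n ≠ 0 := by
    rw [hn]
    have : 0 < q ^ s := pow_pos hq.pos s
    have : 0 < q - 1 := by omega
    positivity
  have hqn : q ∣ n := by
    rw [hn]
    exact dvd_mul_of_dvd_left (dvd_pow_self q (by omega)) _
  have hmem : q ∈ n.primeFactors := Nat.mem_primeFactors.mpr ⟨hq, hqn, hn0⟩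
  have hbound : ∀ p ∈ n.primeFactors, p ≤ q := by
    intro p hp
    have hp' := Nat.prime_of_mem_primeFactors hp
    have hpd := Nat.dvd_of_mem_primeFactors hp
    rw [hn] at hpd
    rcases (Nat.Prime.dvd_mul hp').mp hpd with h1 | h2
    · exact le_of_eq ((Nat.prime_dvd_prime_iff_eq hp' hq).mp (hp'.dvd_of_dvd_pow h1))
    · have := Nat.le_of_dvd (by omega) h2
      omega
  rw [gmax, dif_pos ⟨q, hmem⟩]
  exact le_antisymm (Finset.max'_le _ _ _ hbound) (Finset.le_max' _ _ hmem)

lemma fact_spec {q s n : ℕ} (hq : q.Prime) (hn : n = q ^ s * (q - 1)) :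
    n.factorization q = s := by
  have hq2 := hq.two_le
  have hnd : ¬ q ∣ (q - 1) := fun hd => by
    have := Nat.le_of_dvd (by omega) hd; omega
  rw [hn, Nat.factorization_mul (pow_ne_zero _ hq.pos.ne') (by omega : q - 1 ≠ 0)]
  simp [hq.factorization_pow, Nat.factorization_eq_zero_of_not_dvd hnd]


lemma tot_prod_primes {s : Finset ℕ} (hs : ∀ p ∈ s, p.Prime) :
    Nat.totient (∏ p ∈ s, p) = ∏ p ∈ s, (p - 1) := by
  induction s using Finset.induction_on with
  | empty => simp
  | insert _ _ ha ih =>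
    rename_i a s
    have hap : a.Prime := hs a (Finset.mem_insert_self a s)
    have hs' : ∀ p ∈ s, p.Prime := fun p hp => hs p (Finset.mem_insert_of_mem hp)
    have hcop : Nat.Coprime a (∏ p ∈ s, p) := by
      apply Nat.Coprime.prod_right
      intro p hp
      exact (Nat.coprime_primes hap (hs' p hp)).mpr (fun h => ha (h ▸ hp))
    rw [Finset.prod_insert ha, Finset.prod_insert ha, Nat.totient_mul hcop,
      Nat.totient_prime hap, ih hs']

lemma exists_small_totient {ε : ℝ} (hε : 0 < ε) :
    ∃ a : ℕ, 0 < a ∧ (a.totient : ℝ) < ε * a := by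
  -- divergence of sum of prime reciprocals
  have hdiv : Tendsto (fun k => ∑ i ∈ Finset.range k,
      Set.indicator {p | Nat.Prime p} (fun n => 1 / (n:ℝ)) i) atTop atTop := by
    refine (not_summable_iff_tendsto_nat_atTop_of_nonneg ?_).mp not_summable_one_div_on_primes
    intro n
    exact Set.indicator_nonneg (fun i _ => by positivity) n
  obtain ⟨k, hk⟩ := (tendsto_atTop.mp hdiv (-Real.log ε + 1)).exists
  have hsum : ∑ i ∈ Finset.range k, Set.indicator {p | Nat.Prime p} (fun n => 1 / (n:ℝ)) i
      = ∑ p ∈ k.primesBelow, 1 / (p:ℝ) := by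
    rw [Nat.primesBelow, Finset.sum_filter]
    apply Finset.sum_congr rfl
    intro i _
    by_cases hi : i.Prime <;> simp [Set.indicator_apply, hi]
  rw [hsum] at hk
  set S := ∑ p ∈ k.primesBelow, 1 / (p:ℝ) with hS
  refine ⟨∏ p ∈ k.primesBelow, p, Finset.prod_pos (fun p hp => (Nat.prime_of_mem_primesBelow hp).pos), ?_⟩
  have htot := tot_prod_primes (s := k.primesBelow) (fun p hp => Nat.prime_of_mem_primesBelow hp)
  rw [htot, Nat.cast_prod, Nat.cast_prod]
  have hcast : ∀ p ∈ k.primesBelow, ((p - 1 : ℕ) : ℝ) = (p:ℝ) - 1 := by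
    intro p hp
    have := (Nat.prime_of_mem_primesBelow hp).one_lt
    push_cast [Nat.cast_sub (by omega : 1 ≤ p)]
    ring
  rw [Finset.prod_congr rfl hcast]
  have hfac : ∀ p ∈ k.primesBelow, ((p:ℝ) - 1) ≤ p * Real.exp (-(1/(p:ℝ))) := by
    intro p hp
    have hp2 := (Nat.prime_of_mem_primesBelow hp).two_le
    have hppos : (0:ℝ) < p := by exact_mod_cast (Nat.prime_of_mem_primesBelow hp).pos
    have := Real.add_one_le_exp (-(1/(p:ℝ)))
    have h2 : 1 - 1/(p:ℝ) ≤ Real.exp (-(1/(p:ℝ))) := by linarith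
    calc (p:ℝ) - 1 = p * (1 - 1/(p:ℝ)) := by field_simp
      _ ≤ p * Real.exp (-(1/(p:ℝ))) := by
          exact mul_le_mul_of_nonneg_left h2 hppos.le
  have hprod : ∏ p ∈ k.primesBelow, ((p:ℝ) - 1) ≤
      ∏ p ∈ k.primesBelow, ((p:ℝ) * Real.exp (-(1/(p:ℝ)))) := by
    apply Finset.prod_le_prod
    · intro p hp
      have hp2 := (Nat.prime_of_mem_primesBelow hp).two_le
      have : (2:ℝ) ≤ p := by exact_mod_cast hp2
      linarith
    · exact hfac
  have hfact : ∏ p ∈ k.primesBelow, ((p:ℝ) * Real.exp (-(1/(p:ℝ))))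
      = (∏ p ∈ k.primesBelow, (p:ℝ)) * Real.exp (-S) := by
    rw [Finset.prod_mul_distrib, ← Real.exp_sum]
    congr 1
    rw [hS, ← Finset.sum_neg_distrib]
  have hexp : Real.exp (-S) < ε := by
    calc Real.exp (-S) < Real.exp (Real.log ε) := by
          apply Real.exp_lt_exp.mpr
          linarith
      _ = ε := Real.exp_log hε
  have hppos : (0:ℝ) < ∏ p ∈ k.primesBelow, (p:ℝ) := by
    apply Finset.prod_pos
    intro p hp
    exact_mod_cast (Nat.prime_of_mem_primesBelow hp).pos
  calc (∏ p ∈ k.primesBelow, ((p:ℝ) - 1)) ≤ _ := hprod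
    _ = (∏ p ∈ k.primesBelow, (p:ℝ)) * Real.exp (-S) := hfact
    _ < (∏ p ∈ k.primesBelow, (p:ℝ)) * ε := by
        exact mul_lt_mul_of_pos_left hexp hppos
    _ = ε * ∏ p ∈ k.primesBelow, (p:ℝ) := mul_comm _ _

lemma pi'_div_tendsto_zero :
    Tendsto (fun m : ℕ => (m.primeCounting' : ℝ) / m) atTop (nhds 0) := by
  rw [Metric.tendsto_atTop]
  intro ε hε
  obtain ⟨a, hapos, ha⟩ := exists_small_totient (show (0:ℝ) < ε/2 by linarith)
  set D : ℕ := (a+1).primeCounting' + a.totient with hD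
  obtain ⟨N0, hN0⟩ : ∃ N0 : ℕ, ∀ m ≥ N0, (D:ℝ) / m < ε/2 := by
    have : Tendsto (fun m : ℕ => (D:ℝ)/m) atTop (nhds 0) :=
      tendsto_const_div_atTop_nhds_zero_nat (D:ℝ)
    have h2 := (Metric.tendsto_atTop.mp this) (ε/2) (by linarith)
    obtain ⟨N0, hN⟩ := h2
    refine ⟨N0, fun m hm => ?_⟩
    have := hN m hm
    rw [Real.dist_eq, sub_zero] at this
    exact lt_of_le_of_lt (le_abs_self _) this
  refine ⟨max N0 (a+2), fun m hm => ?_⟩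
  have hm1 : N0 ≤ m := le_trans (le_max_left _ _) hm
  have hm2 : a + 2 ≤ m := le_trans (le_max_right _ _) hm
  have hmpos : (0:ℝ) < m := by
    have : 0 < m := by omega
    exact_mod_cast this
  set n := m - (a + 1) with hn
  have hmn : m = (a + 1) + n := by omega
  have hkey := Nat.primeCounting'_add_le hapos.ne' (Nat.lt_succ_self a) n
  rw [← hmn] at hkey
  have hstep1 : (m.primeCounting' : ℝ) ≤ D + (a.totient : ℝ) * ((n / a : ℕ) : ℝ) := by
    have h1 := Nat.cast_le (α := ℝ) |>.mpr hkey
    rw [Nat.succ_eq_add_one] at h1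
    rw [hD]
    push_cast at h1 ⊢
    nlinarith [h1]
  have hapos' : (0:ℝ) < a := by exact_mod_cast hapos
  have hstep2 : ((n / a : ℕ) : ℝ) ≤ (m : ℝ) / a := by
    calc ((n / a : ℕ) : ℝ) ≤ (n : ℝ) / a := Nat.cast_div_le
      _ ≤ (m : ℝ) / a := by
          have hnm : (n:ℝ) ≤ m := by exact_mod_cast (show n ≤ m by omega)
          gcongr
  have htotnn : (0:ℝ) ≤ (a.totient : ℝ) := by positivity
  have hfinal : (m.primeCounting' : ℝ)/m ≤ (D:ℝ)/m + (a.totient:ℝ)/a :=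
    calc (m.primeCounting' : ℝ)/m ≤ ((D:ℝ) + (a.totient:ℝ) * ((m:ℝ)/a))/m := by
          gcongr
          exact le_trans hstep1 (by nlinarith)
      _ = (D:ℝ)/m + (a.totient:ℝ)/a := by
          rw [add_div]
          congr 1
          rw [mul_div_assoc]
          have h5 : ((m:ℝ)/a)/m = 1/a := by
            rw [div_div, mul_comm, ← div_div, div_self (ne_of_gt hmpos)]
          rw [h5, mul_one_div]
  have htphi : (a.totient:ℝ)/a < ε/2 := by
    rw [div_lt_iff₀ hapos']
    calc (a.totient:ℝ) < ε/2 * a := ha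
      _ = ε/2 * a := rfl
  rw [Real.dist_eq, sub_zero, abs_of_nonneg (by positivity)]
  have := hN0 m hm1
  linarith


lemma real_aux : Tendsto (fun y : ℝ =>
    ((y ^ ((3:ℝ)/8) + 2) * (Real.logb 2 y + 2)) / Real.sqrt y) atTop (nhds 0) := by
  have hlogb : ∀ r : ℝ, 0 < r → (fun y : ℝ => Real.logb 2 y) =o[atTop] fun y => y ^ r := by
    intro r hr
    have := (isLittleO_log_rpow_atTop hr).const_mul_left (Real.log 2)⁻¹
    refine this.congr_left fun y => ?_
    rw [Real.logb, div_eq_inv_mul]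
  have hinv : ∀ r : ℝ, 0 < r →
      Tendsto (fun y : ℝ => (y ^ r)⁻¹) atTop (nhds 0) :=
    fun r hr => tendsto_inv_atTop_zero.comp (tendsto_rpow_atTop hr)
  have t1 : Tendsto (fun y : ℝ => Real.logb 2 y * (y ^ ((1:ℝ)/8))⁻¹) atTop (nhds 0) := by
    have := (hlogb _ (by norm_num : (0:ℝ) < 1/8)).tendsto_div_nhds_zero
    exact this.congr fun y => by rw [div_eq_mul_inv]
  have t2 : Tendsto (fun y : ℝ => 2 * (Real.logb 2 y * (y ^ ((1:ℝ)/2))⁻¹)) atTop (nhds 0) := by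
    have := (hlogb _ (by norm_num : (0:ℝ) < 1/2)).tendsto_div_nhds_zero
    have := this.const_mul (2:ℝ)
    simpa [div_eq_mul_inv, mul_zero] using this
  have t3 : Tendsto (fun y : ℝ => 2 * (y ^ ((1:ℝ)/8))⁻¹) atTop (nhds 0) := by
    simpa [mul_zero] using (hinv _ (by norm_num : (0:ℝ) < 1/8)).const_mul (2:ℝ)
  have t4 : Tendsto (fun y : ℝ => 4 * (y ^ ((1:ℝ)/2))⁻¹) atTop (nhds 0) := by
    simpa [mul_zero] using (hinv _ (by norm_num : (0:ℝ) < 1/2)).const_mul (4:ℝ)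
  have tH : Tendsto (fun y : ℝ => Real.logb 2 y * (y ^ ((1:ℝ)/8))⁻¹
      + 2 * (Real.logb 2 y * (y ^ ((1:ℝ)/2))⁻¹)
      + 2 * (y ^ ((1:ℝ)/8))⁻¹ + 4 * (y ^ ((1:ℝ)/2))⁻¹) atTop (nhds 0) := by
    have := ((t1.add t2).add t3).add t4
    simpa using this
  refine tH.congr' ?_
  filter_upwards [eventually_ge_atTop (1:ℝ)] with y hy
  have hy0 : (0:ℝ) < y := by linarith
  set a := y ^ ((1:ℝ)/8) with ha
  have ha0 : (0:ℝ) < a := Real.rpow_pos_of_pos hy0 _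
  have h38 : y ^ ((3:ℝ)/8) = a ^ 3 := by
    rw [ha, ← Real.rpow_natCast (y ^ ((1:ℝ)/8)) 3, ← Real.rpow_mul hy0.le]
    norm_num
  have h12 : y ^ ((1:ℝ)/2) = a ^ 4 := by
    rw [ha, ← Real.rpow_natCast (y ^ ((1:ℝ)/8)) 4, ← Real.rpow_mul hy0.le]
    norm_num
  have hsq : Real.sqrt y = a ^ 4 := by rw [Real.sqrt_eq_rpow, h12]
  rw [h12, hsq, h38]
  field_simp
  ring

set_option maxHeartbeats 1000000 in
lemma aux_pi (hpi : Tendsto (fun m : ℕ => (m.primeCounting' : ℝ) / m) atTop (nhds 0)) :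
    Tendsto (fun x : ℕ => ((Nat.sqrt x + 2).primeCounting' : ℝ) / Real.sqrt x)
      atTop (nhds 0) := by
  have hsqt : Tendsto Nat.sqrt atTop atTop := by
    apply tendsto_atTop_atTop.mpr
    intro b
    refine ⟨b ^ 2, fun a ha => ?_⟩
    have h2 := Nat.sqrt_le_sqrt ha
    rwa [Nat.sqrt_eq' b] at h2
  have hy : Tendsto (fun x : ℕ => Nat.sqrt x + 2) atTop atTop :=
    tendsto_atTop_mono (fun x => Nat.le_add_right _ 2) hsqt
  have hg : Tendsto (fun x : ℕ =>
      3 * (((Nat.sqrt x + 2).primeCounting' : ℝ) / (Nat.sqrt x + 2 : ℕ))) atTop (nhds 0) := by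
    simpa [mul_zero] using (hpi.comp hy).const_mul (3:ℝ)
  refine squeeze_zero' ?_ ?_ hg
  · filter_upwards with x
    positivity
  · filter_upwards [eventually_ge_atTop 1] with x hx
    have hx1 : (1:ℝ) ≤ Real.sqrt x := by
      rw [show (1:ℝ) = Real.sqrt 1 by simp]
      exact Real.sqrt_le_sqrt (by exact_mod_cast hx)
    have hxpos : (0:ℝ) < Real.sqrt x := by linarith
    have hyb : ((Nat.sqrt x + 2 : ℕ) : ℝ) ≤ 3 * Real.sqrt x := by
      push_cast
      have h1 : ((Nat.sqrt x : ℕ) : ℝ) ≤ Real.sqrt x := Real.nat_sqrt_le_real_sqrt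
      linarith
    have hypos : (0:ℝ) < ((Nat.sqrt x + 2 : ℕ) : ℝ) := by positivity
    have hnn : (0:ℝ) ≤ ((Nat.sqrt x + 2).primeCounting' : ℝ) := by positivity
    rw [show 3 * (((Nat.sqrt x + 2).primeCounting' : ℝ) / ((Nat.sqrt x + 2 : ℕ) : ℝ))
        = (3 * ((Nat.sqrt x + 2).primeCounting' : ℝ)) / ((Nat.sqrt x + 2 : ℕ) : ℝ) by ring,
      div_le_div_iff₀ hxpos hypos]
    nlinarith [hnn, hyb]

lemma aux3 : Tendsto (fun x : ℕ =>
    (((Nat.sqrt (Nat.sqrt (Nat.sqrt (x^3))) + 2) * (Nat.log 2 x + 2) : ℕ) : ℝ)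
      / Real.sqrt x) atTop (nhds 0) := by
  have hcomp : Tendsto (fun x : ℕ =>
      (((x:ℝ) ^ ((3:ℝ)/8) + 2) * (Real.logb 2 (x:ℝ) + 2)) / Real.sqrt (x:ℝ))
      atTop (nhds 0) := real_aux.comp tendsto_natCast_atTop_atTop
  refine squeeze_zero' ?_ ?_ hcomp
  · filter_upwards with x
    positivity
  · filter_upwards [eventually_ge_atTop 1] with x hx
    have hx0 : (0:ℝ) < (x:ℝ) := by exact_mod_cast hx
    set R := Nat.sqrt (Nat.sqrt (Nat.sqrt (x^3))) with hR
    have hR8 : R ^ 8 ≤ x ^ 3 := by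
      have h1 : R ^ 2 ≤ Nat.sqrt (Nat.sqrt (x^3)) := Nat.sqrt_le' _
      have h2 : (Nat.sqrt (Nat.sqrt (x^3))) ^ 2 ≤ Nat.sqrt (x^3) := Nat.sqrt_le' _
      have h3 : (Nat.sqrt (x^3)) ^ 2 ≤ x^3 := Nat.sqrt_le' _
      calc R ^ 8 = ((R ^ 2) ^ 2) ^ 2 := by ring
        _ ≤ ((Nat.sqrt (Nat.sqrt (x^3)) ^ 2)) ^ 2 :=
            Nat.pow_le_pow_left (Nat.pow_le_pow_left h1 2) 2
        _ ≤ (Nat.sqrt (x^3)) ^ 2 := Nat.pow_le_pow_left h2 2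
        _ ≤ x ^ 3 := h3
    have hRr : (R:ℝ) ≤ (x:ℝ) ^ ((3:ℝ)/8) := by
      have h8 : ((R:ℝ)) ^ (8:ℕ) ≤ ((x:ℝ)) ^ (3:ℕ) := by exact_mod_cast hR8
      have := Real.rpow_le_rpow (by positivity) h8 (by norm_num : (0:ℝ) ≤ 1/8)
      rw [← Real.rpow_natCast (R:ℝ) 8, ← Real.rpow_natCast (x:ℝ) 3,
        ← Real.rpow_mul (by positivity), ← Real.rpow_mul (by positivity)] at this
      norm_num at this
      convert this using 2 <;> norm_num
    have hLr : ((Nat.log 2 x : ℕ) : ℝ) ≤ Real.logb 2 (x:ℝ) := by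
      rw [Real.le_logb_iff_rpow_le (by norm_num) hx0]
      rw [Real.rpow_natCast]
      exact_mod_cast Nat.pow_log_le_self 2 (by omega)
    have hnum : (((R + 2) * (Nat.log 2 x + 2) : ℕ) : ℝ)
        ≤ ((x:ℝ) ^ ((3:ℝ)/8) + 2) * (Real.logb 2 (x:ℝ) + 2) := by
      push_cast
      have hb1 : (0:ℝ) ≤ (R:ℝ) + 2 := by positivity
      have hb2 : (0:ℝ) ≤ ((Nat.log 2 x : ℕ):ℝ) + 2 := by positivity
      have := mul_le_mul (by linarith : ((R:ℝ) + 2) ≤ (x:ℝ) ^ ((3:ℝ)/8) + 2)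
        (by linarith : ((Nat.log 2 x : ℕ):ℝ) + 2 ≤ Real.logb 2 (x:ℝ) + 2) hb2 (by positivity)
      linarith
    exact div_le_div_of_nonneg_right hnum (Real.sqrt_nonneg _)

lemma count_bound (x : ℕ) :
    ({n : ℕ | n + 4 ≤ x ∧ n % 4 = 2 ∧ (∃ a, Nat.totient a = n) ∧
        (∃ b, Nat.totient b = n + 4)}).ncard
    ≤ ({p : ℕ | p ≤ x ∧ p.Prime ∧ Nat.Prime (p+4)}).ncard
      + 2 * (Nat.sqrt x + 2).primeCounting'
      + 2 * ((Nat.sqrt (Nat.sqrt (Nat.sqrt (x^3))) + 2) * (Nat.log 2 x + 2)) := by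
  set R := Nat.sqrt (Nat.sqrt (Nat.sqrt (x^3))) with hRdef
  set L := Nat.log 2 x with hLdef
  set A := {n : ℕ | n + 4 ≤ x ∧ (n+1).Prime ∧ (n+5).Prime} with hAdef
  set B := {n : ℕ | n ≤ x ∧ ∃ q, q.Prime ∧ n = q ^ 1 * (q - 1)} with hBdef
  set C := {n : ℕ | n ≤ x ∧ ∃ q s, q.Prime ∧ 2 ≤ s ∧ n = q ^ s * (q - 1)} with hCdef
  set B' := {n : ℕ | n + 4 ≤ x ∧ ∃ q, q.Prime ∧ n + 4 = q ^ 1 * (q - 1)} with hB'def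
  set C' := {n : ℕ | n + 4 ≤ x ∧ ∃ q s, q.Prime ∧ 2 ≤ s ∧ n + 4 = q ^ s * (q - 1)} with hC'def
  -- the subset step
  have hsub : {n : ℕ | n + 4 ≤ x ∧ n % 4 = 2 ∧ (∃ a, Nat.totient a = n) ∧
      (∃ b, Nat.totient b = n + 4)} ⊆ (A ∪ (B ∪ C)) ∪ (B' ∪ C') := by
    rintro n ⟨hx4, hmod, ⟨a, ha⟩, ⟨b, hb⟩⟩
    have hnx : n ≤ x := by omega
    have h1 := lemB a (by rw [ha]; exact hmod)
    have h2 := lemB b (by rw [hb]; omega)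
    rw [ha] at h1
    rw [hb] at h2
    rcases h1 with hp1 | ⟨q, t, hq, ht, hqt⟩
    · rcases h2 with hp2 | ⟨q, t, hq, ht, hqt⟩
      · left; left
        exact ⟨hx4, hp1, by rw [show n + 5 = n + 4 + 1 by ring]; exact hp2⟩
      · right
        rcases eq_or_lt_of_le ht with ht2 | ht3
        · left
          exact ⟨hx4, q, hq, by rw [hqt, ← ht2]⟩
        · right
          exact ⟨hx4, q, t - 1, hq, by omega, hqt⟩
    · left; right
      rcases eq_or_lt_of_le ht with ht2 | ht3
      · left
        exact ⟨hnx, q, hq, by rw [hqt, ← ht2]⟩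
      · right
        exact ⟨hnx, q, t - 1, hq, by omega, hqt⟩
  -- finiteness
  have hfinIic : (Set.Iic x).Finite := Set.finite_Iic x
  have hfinA : A.Finite := hfinIic.subset (fun n hn => by
    simp only [hAdef, Set.mem_setOf_eq] at hn; exact Set.mem_Iic.mpr (by omega))
  have hfinB : B.Finite := hfinIic.subset (fun n hn => by
    simp only [hBdef, Set.mem_setOf_eq] at hn; exact Set.mem_Iic.mpr (by omega))
  have hfinC : C.Finite := hfinIic.subset (fun n hn => by
    simp only [hCdef, Set.mem_setOf_eq] at hn; exact Set.mem_Iic.mpr (by omega))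
  have hfinB' : B'.Finite := hfinIic.subset (fun n hn => by
    simp only [hB'def, Set.mem_setOf_eq] at hn; exact Set.mem_Iic.mpr (by omega))
  have hfinC' : C'.Finite := hfinIic.subset (fun n hn => by
    simp only [hC'def, Set.mem_setOf_eq] at hn; exact Set.mem_Iic.mpr (by omega))
  have hfinCousin : ({p : ℕ | p ≤ x ∧ p.Prime ∧ Nat.Prime (p+4)}).Finite :=
    hfinIic.subset (fun p hp => Set.mem_Iic.mpr hp.1)
  -- individual bounds
  have hA : A.ncard ≤ ({p : ℕ | p ≤ x ∧ p.Prime ∧ Nat.Prime (p+4)}).ncard := by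
    refine Set.ncard_le_ncard_of_injOn (fun n => n + 1) ?_ ?_ hfinCousin
    · rintro n ⟨h1, h2, h3⟩
      show n + 1 ∈ {p : ℕ | p ≤ x ∧ p.Prime ∧ Nat.Prime (p+4)}
      exact ⟨by omega, h2, by rw [show n + 1 + 4 = n + 5 by ring]; exact h3⟩
    · intro a _ b _ h
      simpa using h
  have hgB : ∀ y ∈ B, gmax y ∈ (Nat.sqrt x + 2).primesBelow ∧ ∃ q, q.Prime ∧ y = q ^ 1 * (q-1) ∧ gmax y = q := by
    rintro y ⟨hyx, q, hq, hyq⟩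
    have hg := gmax_spec hq le_rfl hyq
    have hq2 := hq.two_le
    refine ⟨Nat.mem_primesBelow.mpr ⟨?_, by rw [hg]; exact hq⟩, q, hq, hyq, hg⟩
    have hle : (q - 1) * (q - 1) ≤ x := by
      have h5 : (q-1) * (q-1) ≤ q^1 * (q-1) :=
        Nat.mul_le_mul_right (q-1) (by rw [pow_one]; omega)
      omega
    have := Nat.le_sqrt.mpr hle
    rw [hg]
    omega
  have hB : B.ncard ≤ (Nat.sqrt x + 2).primeCounting' := by
    rw [← Nat.primesBelow_card_eq_primeCounting', ← Set.ncard_coe_finset]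
    refine Set.ncard_le_ncard_of_injOn gmax ?_ ?_ ((Nat.primesBelow _).finite_toSet)
    · intro y hy
      exact (hgB y hy).1
    · intro a ha b hb h
      obtain ⟨-, q, hq, haq, hga⟩ := hgB a ha
      obtain ⟨-, q', hq', hbq, hgb⟩ := hgB b hb
      have hqq : q = q' := by rw [← hga, ← hgb]; exact h
      rw [haq, hbq, hqq]
  have hgB' : ∀ y ∈ B', gmax (y+4) ∈ (Nat.sqrt x + 2).primesBelow ∧
      ∃ q, q.Prime ∧ y + 4 = q ^ 1 * (q-1) ∧ gmax (y+4) = q := by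
    rintro y ⟨hyx, q, hq, hyq⟩
    have hg := gmax_spec hq le_rfl hyq
    have hq2 := hq.two_le
    refine ⟨Nat.mem_primesBelow.mpr ⟨?_, by rw [hg]; exact hq⟩, q, hq, hyq, hg⟩
    have hle : (q - 1) * (q - 1) ≤ x := by
      have h5 : (q-1) * (q-1) ≤ q^1 * (q-1) :=
        Nat.mul_le_mul_right (q-1) (by rw [pow_one]; omega)
      omega
    have := Nat.le_sqrt.mpr hle
    rw [hg]
    omega
  have hB' : B'.ncard ≤ (Nat.sqrt x + 2).primeCounting' := by
    rw [← Nat.primesBelow_card_eq_primeCounting', ← Set.ncard_coe_finset]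
    refine Set.ncard_le_ncard_of_injOn (fun y => gmax (y+4)) ?_ ?_
      ((Nat.primesBelow _).finite_toSet)
    · intro y hy
      exact (hgB' y hy).1
    · intro a ha b hb h
      obtain ⟨-, q, hq, haq, hga⟩ := hgB' a ha
      obtain ⟨-, q', hq', hbq, hgb⟩ := hgB' b hb
      have hqq : q = q' := by rw [← hga, ← hgb]; exact h
      rw [hqq] at haq
      omega
  -- the C bounds
  have hgC : ∀ z x', z ≤ x' → x' ≤ x → (∃ q s, q.Prime ∧ 2 ≤ s ∧ z = q ^ s * (q - 1)) →
      (gmax z - 1, z.factorization (gmax z)) ∈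
        ((Finset.range (R+2)) ×ˢ (Finset.range (L+2)) : Finset (ℕ × ℕ)) ∧
      ∃ q s, q.Prime ∧ 2 ≤ s ∧ z = q ^ s * (q - 1) ∧ gmax z = q ∧
        z.factorization (gmax z) = s := by
    rintro z x' hzx' hx'x ⟨q, s, hq, hs, hzq⟩
    have hq2 := hq.two_le
    have hg := gmax_spec hq (by omega) hzq
    have hf : z.factorization (gmax z) = s := by rw [hg]; exact fact_spec hq hzq
    have hzx : z ≤ x := le_trans hzx' hx'x
    refine ⟨Finset.mem_product.mpr ⟨?_, ?_⟩, q, s, hq, hs, hzq, hg, hf⟩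
    · -- q - 1 < R + 2
      rw [Finset.mem_range, hg]
      set a := q - 1 with hadef
      have ha3 : a^3 ≤ z := by
        calc a^3 = (a*a)*a := by ring
          _ ≤ (q^s) * (q-1) := by
              apply Nat.mul_le_mul_right
              calc a * a ≤ q * q := Nat.mul_le_mul (by omega) (by omega)
                _ ≤ q ^ s := by
                    calc q * q = q ^ 2 := by ring
                      _ ≤ q ^ s := Nat.pow_le_pow_right (by omega) hs
          _ = z := hzq.symm
      have h8 : a^8 ≤ x^3 := by
        have h9 : a^8 ≤ (a^3)^3 := by
          calc a^8 ≤ a^9 := Nat.pow_le_pow_right (by omega) (by omega)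
            _ = (a^3)^3 := by ring
        calc a^8 ≤ (a^3)^3 := h9
          _ ≤ x^3 := Nat.pow_le_pow_left (le_trans ha3 hzx) 3
      have haR : a ≤ R := by
        rw [hRdef]
        apply Nat.le_sqrt.mpr
        apply Nat.le_sqrt.mpr
        apply Nat.le_sqrt.mpr
        calc a*a*(a*a)*(a*a*(a*a)) = a^8 := by ring
          _ ≤ x^3 := h8
      omega
    · -- s < L + 2
      rw [Finset.mem_range, hf]
      have hzpos : 1 ≤ z := by
        rw [hzq]
        have h1 : 0 < q ^ s := pow_pos hq.pos s
        have h2 : 0 < q - 1 := by omega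
        exact Nat.one_le_iff_ne_zero.mpr (by positivity)
      have hpow : 2^s ≤ x := by
        calc 2^s ≤ q^s := Nat.pow_le_pow_left (by omega) s
          _ ≤ q^s * (q-1) := Nat.le_mul_of_pos_right _ (by omega)
          _ = z := hzq.symm
          _ ≤ x := hzx
      have := (Nat.le_log_iff_pow_le (by norm_num) (by omega : x ≠ 0)).mpr hpow
      omega
  have hC : C.ncard ≤ (R+2) * (L+2) := by
    have hcard : ((Finset.range (R+2)) ×ˢ (Finset.range (L+2)) : Finset (ℕ × ℕ)).card
        = (R+2) * (L+2) := by
      rw [Finset.card_product, Finset.card_range, Finset.card_range]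
    rw [← hcard, ← Set.ncard_coe_finset]
    refine Set.ncard_le_ncard_of_injOn
      (fun z => (gmax z - 1, z.factorization (gmax z))) ?_ ?_
      (Finset.finite_toSet _)
    · rintro z ⟨hzx, hz⟩
      exact (hgC z z le_rfl hzx hz).1
    · rintro z ⟨hzx, hz⟩ z' ⟨hzx', hz'⟩ h
      obtain ⟨-, q, s, hq, hs, hzq, hg, hf⟩ := hgC z z le_rfl hzx hz
      obtain ⟨-, q', s', hq', hs', hzq', hg', hf'⟩ := hgC z' z' le_rfl hzx' hz'
      have hf2 : z.factorization q = s := by rw [← hg]; exact hf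
      have hf2' : z'.factorization q' = s' := by rw [← hg']; exact hf'
      simp only [Prod.mk.injEq, hg, hg', hf2, hf2'] at h
      have hqq : q = q' := by have := hq.two_le; have := hq'.two_le; omega
      rw [hzq, hzq', hqq, h.2]
  have hC' : C'.ncard ≤ (R+2) * (L+2) := by
    have hcard : ((Finset.range (R+2)) ×ˢ (Finset.range (L+2)) : Finset (ℕ × ℕ)).card
        = (R+2) * (L+2) := by
      rw [Finset.card_product, Finset.card_range, Finset.card_range]
    rw [← hcard, ← Set.ncard_coe_finset]
    refine Set.ncard_le_ncard_of_injOn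
      (fun z => (gmax (z+4) - 1, (z+4).factorization (gmax (z+4)))) ?_ ?_
      (Finset.finite_toSet _)
    · rintro z ⟨hzx, hz⟩
      exact (hgC (z+4) x hzx le_rfl hz).1
    · rintro z ⟨hzx, hz⟩ z' ⟨hzx', hz'⟩ h
      obtain ⟨-, q, s, hq, hs, hzq, hg, hf⟩ := hgC (z+4) x hzx le_rfl hz
      obtain ⟨-, q', s', hq', hs', hzq', hg', hf'⟩ := hgC (z'+4) x hzx' le_rfl hz'
      have hf2 : (z+4).factorization q = s := by rw [← hg]; exact hf
      have hf2' : (z'+4).factorization q' = s' := by rw [← hg']; exact hf'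
      simp only [Prod.mk.injEq, hg, hg', hf2, hf2'] at h
      have hqq : q = q' := by have := hq.two_le; have := hq'.two_le; omega
      rw [hqq, h.2] at hzq
      omega
  -- assemble
  calc ({n : ℕ | n + 4 ≤ x ∧ n % 4 = 2 ∧ (∃ a, Nat.totient a = n) ∧
        (∃ b, Nat.totient b = n + 4)}).ncard
      ≤ ((A ∪ (B ∪ C)) ∪ (B' ∪ C')).ncard :=
        Set.ncard_le_ncard hsub
          (((hfinA.union (hfinB.union hfinC)).union (hfinB'.union hfinC')))
    _ ≤ (A ∪ (B ∪ C)).ncard + (B' ∪ C').ncard := Set.ncard_union_le _ _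
    _ ≤ (A.ncard + ((B ∪ C)).ncard) + (B'.ncard + C'.ncard) :=
        Nat.add_le_add (Set.ncard_union_le _ _) (Set.ncard_union_le _ _)
    _ ≤ (A.ncard + (B.ncard + C.ncard)) + (B'.ncard + C'.ncard) :=
        Nat.add_le_add (Nat.add_le_add le_rfl (Set.ncard_union_le _ _)) le_rfl
    _ ≤ _ := by omega


theorem consecutive_totient_pairs_little_o_sqrt
    (hcousin : Tendsto
      (fun x : ℕ =>
        (({p : ℕ | p ≤ x ∧ p.Prime ∧ Nat.Prime (p + 4)}.ncard : ℝ)) /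
          Real.sqrt x)
      atTop (nhds 0)) :
    Tendsto
      (fun x : ℕ =>
        (({n : ℕ | n + 4 ≤ x ∧ n % 4 = 2 ∧
            (∃ a : ℕ, Nat.totient a = n) ∧
            (∃ b : ℕ, Nat.totient b = n + 4)}.ncard : ℝ)) / Real.sqrt x)
      atTop (nhds 0) := by
  have h2 := aux_pi pi'_div_tendsto_zero
  have h3 := aux3
  have hbig : Tendsto (fun x : ℕ =>
      (({p : ℕ | p ≤ x ∧ p.Prime ∧ Nat.Prime (p + 4)}.ncard : ℝ)) / Real.sqrt x
      + (2 * (((Nat.sqrt x + 2).primeCounting' : ℝ) / Real.sqrt x)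
      + 2 * ((((Nat.sqrt (Nat.sqrt (Nat.sqrt (x^3))) + 2) * (Nat.log 2 x + 2) : ℕ) : ℝ)
          / Real.sqrt x))) atTop (nhds 0) := by
    have := hcousin.add ((h2.const_mul (2:ℝ)).add (h3.const_mul (2:ℝ)))
    simpa using this
  refine squeeze_zero' ?_ ?_ hbig
  · filter_upwards with x
    positivity
  · filter_upwards with x
    have hcb := count_bound x
    have hs : (0:ℝ) ≤ Real.sqrt x := Real.sqrt_nonneg _
    have hcast : (({n : ℕ | n + 4 ≤ x ∧ n % 4 = 2 ∧
        (∃ a : ℕ, Nat.totient a = n) ∧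
        (∃ b : ℕ, Nat.totient b = n + 4)}.ncard : ℝ))
        ≤ (({p : ℕ | p ≤ x ∧ p.Prime ∧ Nat.Prime (p + 4)}.ncard : ℝ))
          + 2 * ((Nat.sqrt x + 2).primeCounting' : ℝ)
          + 2 * ((((Nat.sqrt (Nat.sqrt (Nat.sqrt (x^3))) + 2) * (Nat.log 2 x + 2) : ℕ) : ℝ)) := by
      exact_mod_cast hcb
    calc (({n : ℕ | n + 4 ≤ x ∧ n % 4 = 2 ∧
        (∃ a : ℕ, Nat.totient a = n) ∧
        (∃ b : ℕ, Nat.totient b = n + 4)}.ncard : ℝ)) / Real.sqrt x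
        ≤ ((({p : ℕ | p ≤ x ∧ p.Prime ∧ Nat.Prime (p + 4)}.ncard : ℝ))
          + 2 * ((Nat.sqrt x + 2).primeCounting' : ℝ)
          + 2 * ((((Nat.sqrt (Nat.sqrt (Nat.sqrt (x^3))) + 2) * (Nat.log 2 x + 2) : ℕ) : ℝ)))
            / Real.sqrt x := div_le_div_of_nonneg_right hcast hs
      _ = _ := by ring
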